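/- Let f : ℝ^d → ℝ be L-smooth and ℓ-strongly convex with 0 ≤ ℓ < L. Then for all x, y ∈ ℝ^d: f(x) ≥ f(y) + ⟨∇f(y), x − y⟩ + (1/(2(1 − ℓ/L))) [ (1/L)‖∇f(x) − ∇f(y)‖² + ℓ‖x − y‖² − 2(ℓ/L)⟨∇f(y) − ∇f(x), y − x⟩ ]. -/

import Mathlib

open InnerProductSpace Set

variable {E : Type*} [NormedAddCommGroup E] [InnerProductSpace ℝ E] [CompleteSpace E]

local notation "⟪" x ", " y "⟫" => @inner ℝ _ _ x y

/-- derivative along a line -/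
lemma aux_lineDeriv {g : E → ℝ} {G : E → E} (hg : ∀ z, HasGradientAt g (G z) z)
    (y v : E) (t : ℝ) :
    HasDerivAt (fun t : ℝ => g (y + t • v)) ⟪G (y + t • v), v⟫ t := by
  have hc : HasDerivAt (fun t : ℝ => y + t • v) v t := by
    simpa using ((hasDerivAt_id t).smul_const v).const_add y
  have := (hg (y + t • v)).hasFDerivAt.comp_hasDerivAt t hc
  simpa [toDual_apply_apply, Function.comp_def] using this

/-- first-order lower bound for convex functions -/
lemma aux_lower {g : E → ℝ} {G : E → E} (hg : ∀ z, HasGradientAt g (G z) z)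
    (hconv : ConvexOn ℝ Set.univ g) (x y : E) :
    g y + ⟪G y, x - y⟫ ≤ g x := by
  set v := x - y with hv
  have hφ : ConvexOn ℝ Set.univ (fun t : ℝ => g (y + t • v)) := by
    have := hconv.comp_affineMap (AffineMap.lineMap y x : ℝ →ᵃ[ℝ] E)
    simp only [Set.preimage_univ] at this
    convert this using 2 with t
    case e'_4 => rfl
    case e'_5 => rfl
    case e'_6 => rfl
    case e'_9 => rfl
    simp [AffineMap.lineMap_apply, hv]
    abel
  have hd : HasDerivAt (fun t : ℝ => g (y + t • v)) ⟪G y, v⟫ 0 := by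
    simpa using aux_lineDeriv hg y v 0
  have := hφ.le_slope_of_hasDerivAt (Set.mem_univ 0) (Set.mem_univ 1) one_pos hd
  rw [slope_def_field] at this
  have h1 : y + v = x := by simp [hv]
  simp only [one_smul, zero_smul, add_zero, sub_zero, div_one, h1] at this
  linarith [this]

/-- descent lemma: upper quadratic bound from Lipschitz gradient -/
lemma aux_upper {g : E → ℝ} {G : E → E} {L : ℝ} (hL : 0 ≤ L)
    (hg : ∀ z, HasGradientAt g (G z) z)
    (hlip : ∀ a b, ‖G a - G b‖ ≤ L * ‖a - b‖) (x y : E) :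
    g x ≤ g y + ⟪G y, x - y⟫ + L / 2 * ‖x - y‖ ^ 2 := by
  set v := x - y with hv
  set ψ : ℝ → ℝ := fun t => g (y + t • v) - t * ⟪G y, v⟫ - L * ‖v‖ ^ 2 / 2 * t ^ 2 with hψ
  have hψd : ∀ t : ℝ, HasDerivAt ψ (⟪G (y + t • v), v⟫ - ⟪G y, v⟫ - L * ‖v‖ ^ 2 * t) t := by
    intro t
    have h1 := aux_lineDeriv hg y v t
    have h2 : HasDerivAt (fun t : ℝ => t * ⟪G y, v⟫) ⟪G y, v⟫ t := by
      simpa using (hasDerivAt_id t).mul_const ⟪G y, v⟫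
    have h3 : HasDerivAt (fun t : ℝ => L * ‖v‖ ^ 2 / 2 * t ^ 2) (L * ‖v‖ ^ 2 * t) t := by
      have := (hasDerivAt_pow 2 t).const_mul (L * ‖v‖ ^ 2 / 2)
      exact this.congr_deriv (by simp; ring)
    exact (h1.sub h2).sub h3
  have hanti : AntitoneOn ψ (Set.Icc 0 1) := by
    apply antitoneOn_of_deriv_nonpos (convex_Icc 0 1)
    · exact fun t _ => ((hψd t).continuousAt).continuousWithinAt
    · exact fun t _ => ((hψd t).differentiableAt).differentiableWithinAt
    · intro t ht
      rw [interior_Icc] at ht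
      rw [(hψd t).deriv]
      have hb : ⟪G (y + t • v) - G y, v⟫ ≤ L * t * ‖v‖ ^ 2 := by
        calc ⟪G (y + t • v) - G y, v⟫ ≤ ‖G (y + t • v) - G y‖ * ‖v‖ := real_inner_le_norm _ _
          _ ≤ (L * ‖(y + t • v) - y‖) * ‖v‖ := by
              gcongr; exact hlip _ _
          _ = L * t * ‖v‖ ^ 2 := by
              have : ‖(y + t • v) - y‖ = t * ‖v‖ := by
                simp [norm_smul, abs_of_pos ht.1]
              rw [this]; ring
      have hin : ⟪G (y + t • v), v⟫ - ⟪G y, v⟫ = ⟪G (y + t • v) - G y, v⟫ := by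
        rw [inner_sub_left]
      rw [hin]
      nlinarith [hb]
  have := hanti (Set.mem_Icc.2 ⟨le_refl 0, zero_le_one⟩) (Set.mem_Icc.2 ⟨zero_le_one, le_refl 1⟩) zero_le_one
  have h0 : ψ 0 = g y := by simp [hψ]
  have h1 : ψ 1 = g x - ⟪G y, v⟫ - L * ‖v‖ ^ 2 / 2 := by
    simp [hψ, hv]
  rw [h0, h1] at this
  linarith

/-- cocoercivity-type lower bound -/
lemma aux_coco {g : E → ℝ} {G : E → E} {M : ℝ} (hM : 0 < M)
    (hg : ∀ z, HasGradientAt g (G z) z)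
    (hconv : ConvexOn ℝ Set.univ g)
    (hupper : ∀ x y, g x ≤ g y + ⟪G y, x - y⟫ + M / 2 * ‖x - y‖ ^ 2) (x y : E) :
    g y + ⟪G y, x - y⟫ + 1 / (2 * M) * ‖G x - G y‖ ^ 2 ≤ g x := by
  set Δ := G x - G y with hΔ
  set z := x - M⁻¹ • Δ with hz
  have h1 := hupper z x
  have h2 := aux_lower hg hconv z y
  have e1 : ⟪G x, z - x⟫ = -(M⁻¹ * ⟪G x, Δ⟫) := by
    rw [hz]
    simp [real_inner_smul_right]
  have e2 : ‖z - x‖ ^ 2 = M⁻¹ ^ 2 * ‖Δ‖ ^ 2 := by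
    rw [hz]
    simp [norm_smul, abs_of_pos (inv_pos.2 hM), mul_pow]
  have e3 : ⟪G y, z - y⟫ = ⟪G y, x - y⟫ - M⁻¹ * ⟪G y, Δ⟫ := by
    rw [hz, sub_right_comm, inner_sub_right, real_inner_smul_right]
  rw [e1, e2] at h1
  rw [e3] at h2
  have e4 : ⟪G x, Δ⟫ - ⟪G y, Δ⟫ = ‖Δ‖ ^ 2 := by
    rw [← inner_sub_left, ← hΔ, real_inner_self_eq_norm_sq]
  have hM' : M ≠ 0 := ne_of_gt hM
  have : 1 / (2 * M) * ‖Δ‖ ^ 2 ≤ M⁻¹ * ⟪G x, Δ⟫ - M⁻¹ * ⟪G y, Δ⟫ - M / 2 * (M⁻¹ ^ 2 * ‖Δ‖ ^ 2) := by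
    have : M⁻¹ * ⟪G x, Δ⟫ - M⁻¹ * ⟪G y, Δ⟫ = M⁻¹ * ‖Δ‖ ^ 2 := by
      rw [← mul_sub, e4]
    rw [this]
    have heq : M⁻¹ * ‖Δ‖ ^ 2 - M / 2 * (M⁻¹ ^ 2 * ‖Δ‖ ^ 2) = 1 / (2 * M) * ‖Δ‖ ^ 2 := by
      field_simp
      ring
    linarith [heq.ge]
  linarith


lemma aux_quad (c : ℝ) (z : E) :
    HasGradientAt (fun x : E => c / 2 * ‖x‖ ^ 2) (c • z) z := by
  have hinner : HasFDerivAt (fun x : E => ⟪x, x⟫) (toDual ℝ E ((2:ℝ) • z)) z := by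
    have h := (hasFDerivAt_id z).inner ℝ (hasFDerivAt_id z)
    refine h.congr_fderiv ?_
    ext v
    simp [fderivInnerCLM_apply, toDual_apply_apply, real_inner_comm, real_inner_smul_left]
    ring
  have h2 : HasFDerivAt (fun x : E => c / 2 * ⟪x, x⟫) (toDual ℝ E (c • z)) z := by
    have := hinner.const_mul (c / 2)
    refine this.congr_fderiv ?_
    ext v
    simp [toDual_apply_apply, real_inner_smul_left]
    ring
  have h3 : (fun x : E => c / 2 * ‖x‖ ^ 2) = fun x : E => c / 2 * ⟪x, x⟫ := by
    funext x
    rw [real_inner_self_eq_norm_sq]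
  rw [h3]
  have := h2.hasGradientAt
  simpa using this

theorem stmt_15 {d : ℕ} (f : EuclideanSpace ℝ (Fin d) → ℝ)
    (f' : EuclideanSpace ℝ (Fin d) → EuclideanSpace ℝ (Fin d))
    (ℓ L : ℝ) (hℓ : 0 ≤ ℓ) (hℓL : ℓ < L)
    (hdiff : ∀ x, HasGradientAt f (f' x) x)
    (hsc : ConvexOn ℝ Set.univ (fun x => f x - ℓ / 2 * ‖x‖ ^ 2))
    (hsmooth : ∀ x y, ‖f' x - f' y‖ ≤ L * ‖x - y‖) :
    ∀ x y, f x ≥ f y + inner ℝ (f' y) (x - y)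
      + (1 / (2 * (1 - ℓ / L))) *
        ((1 / L) * ‖f' x - f' y‖ ^ 2 + ℓ * ‖x - y‖ ^ 2
          - 2 * (ℓ / L) * inner ℝ (f' y - f' x) (y - x)) := by
  intro x y
  have hL0 : (0:ℝ) < L := lt_of_le_of_lt hℓ hℓL
  set M := L - ℓ with hMdef
  have hM : 0 < M := by simp [hMdef]; linarith
  set g : EuclideanSpace ℝ (Fin d) → ℝ := fun x => f x - ℓ / 2 * ‖x‖ ^ 2 with hgdef
  set G : EuclideanSpace ℝ (Fin d) → EuclideanSpace ℝ (Fin d) := fun z => f' z - ℓ • z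
    with hGdef
  have hg : ∀ z, HasGradientAt g (G z) z := by
    intro z
    have h1 := (hdiff z).hasFDerivAt
    have h2 := (aux_quad ℓ z).hasFDerivAt
    have h3 := h1.sub h2
    have := h3.hasGradientAt
    simpa [hGdef, map_sub, hgdef, Pi.sub_def] using this
  have hupper_f : ∀ a b, f a ≤ f b + ⟪f' b, a - b⟫ + L / 2 * ‖a - b‖ ^ 2 :=
    aux_upper (le_of_lt hL0) hdiff hsmooth
  -- key quadratic identity
  have hquad : ∀ a b : EuclideanSpace ℝ (Fin d),
      ℓ / 2 * ‖a‖ ^ 2 - ℓ / 2 * ‖b‖ ^ 2 - ℓ * ⟪b, a - b⟫ = ℓ / 2 * ‖a - b‖ ^ 2 := by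
    intro a b
    have h1 : ‖a - b‖ ^ 2 = ‖a‖ ^ 2 - 2 * ⟪a, b⟫ + ‖b‖ ^ 2 := norm_sub_sq_real a b
    have h2 : ⟪b, a - b⟫ = ⟪b, a⟫ - ‖b‖ ^ 2 := by
      rw [inner_sub_right, real_inner_self_eq_norm_sq]
    have h3 : ⟪a, b⟫ = ⟪b, a⟫ := real_inner_comm b a
    nlinarith [h1, h2, h3]
  have hupper_g : ∀ a b, g a ≤ g b + ⟪G b, a - b⟫ + M / 2 * ‖a - b‖ ^ 2 := by
    intro a b
    have h1 := hupper_f a b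
    have h2 : ⟪G b, a - b⟫ = ⟪f' b, a - b⟫ - ℓ * ⟪b, a - b⟫ := by
      simp only [hGdef]
      rw [inner_sub_left, real_inner_smul_left]
    have h3 := hquad a b
    simp only [hgdef]
    rw [h2]
    have : M / 2 * ‖a - b‖ ^ 2 = L / 2 * ‖a - b‖ ^ 2 - ℓ / 2 * ‖a - b‖ ^ 2 := by
      rw [hMdef]; ring
    linarith
  have hcoco := aux_coco hM hg hsc hupper_g x y
  -- unfold everything
  have hGd : G x - G y = (f' x - f' y) - ℓ • (x - y) := by
    simp [hGdef, smul_sub]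
    abel
  have hnorm : ‖G x - G y‖ ^ 2
      = ‖f' x - f' y‖ ^ 2 - 2 * ℓ * ⟪f' x - f' y, x - y⟫ + ℓ ^ 2 * ‖x - y‖ ^ 2 := by
    rw [hGd, norm_sub_sq_real, real_inner_smul_right, norm_smul]
    rw [mul_pow, Real.norm_eq_abs, sq_abs]
    ring
  have hGin : ⟪G y, x - y⟫ = ⟪f' y, x - y⟫ - ℓ * ⟪y, x - y⟫ := by
    simp only [hGdef]
    rw [inner_sub_left, real_inner_smul_left]
  have hflip : ⟪f' y - f' x, y - x⟫ = ⟪f' x - f' y, x - y⟫ := by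
    rw [show f' y - f' x = -(f' x - f' y) from (neg_sub _ _).symm,
        show y - x = -(x - y) from (neg_sub _ _).symm, inner_neg_neg]
  rw [ge_iff_le]
  show f y + ⟪f' y, x - y⟫ + 1 / (2 * (1 - ℓ / L)) *
      (1 / L * ‖f' x - f' y‖ ^ 2 + ℓ * ‖x - y‖ ^ 2
        - 2 * (ℓ / L) * ⟪f' y - f' x, y - x⟫) ≤ f x
  rw [hflip]
  set a := ‖f' x - f' y‖ ^ 2
  set b := ‖x - y‖ ^ 2
  set c := ⟪f' x - f' y, x - y⟫
  have hkey : 1 / (2 * (1 - ℓ / L)) * (1 / L * a + ℓ * b - 2 * (ℓ / L) * c)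
      = ℓ / 2 * b + 1 / (2 * M) * (a - 2 * ℓ * c + ℓ ^ 2 * b) := by
    have h1 : 1 - ℓ / L = M / L := by rw [hMdef]; field_simp
    rw [h1, hMdef]
    have hML : L - ℓ ≠ 0 := by linarith
    field_simp
    ring
  rw [hkey]
  simp only [hgdef] at hcoco
  rw [hGin, hnorm] at hcoco
  have hq : ℓ / 2 * ‖x‖ ^ 2 - ℓ / 2 * ‖y‖ ^ 2 - ℓ * ⟪y, x - y⟫ = ℓ / 2 * b :=
    hquad x y
  linarith
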